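/- Let R be a commutative ring and n a natural number, and assume either n ≡ 0 (mod 4) or 2 = 0 in R. On M = Finset (Fin n) → R define B(α, β) = Σ_{I ⊆ Fin n} (−1)^(Σ_{i ∈ I} i) · α(I) · β(Iᶜ) and q(α) = Σ_{I ⊆ Fin n, 0 ∈ I} (−1)^(Σ_{i ∈ I} i) · α(I) · α(Iᶜ). Let P : M →ₗ[R] M be the projection (P α)(I) = α(I) if 0 ∈ I and (P α)(I) = 0 otherwise. Then for every x ∈ M, the trace of the composite endomorphism P ∘ (z ↦ B(x, z) • x) equals q(x); equivalently B(x, P x) = q(x). -/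

import Mathlib

/-- The coordinate expression of the bilinear form `b_∧(x, y) = π(x̄ ∧ y)` on the exterior
algebra `∧(R^n)` in the basis `{v_I}`. -/
def Bwedge {R : Type*} [CommRing R] {n : ℕ} (α β : Finset (Fin n) → R) : R :=
  ∑ I : Finset (Fin n), (-1 : R) ^ (∑ i ∈ I, (i : ℕ)) * α I * β Iᶜ

/-- For a fixed `α`, the dual element `B(α, ·)`, i.e. `β ↦ Bwedge α β`, as a linear map. -/
noncomputable def BwedgeDual {R : Type*} [CommRing R] {n : ℕ} (α : Finset (Fin n) → R) :
    Module.Dual R (Finset (Fin n) → R) :=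
  ∑ I : Finset (Fin n), ((-1 : R) ^ (∑ i ∈ I, (i : ℕ)) * α I) •
    (LinearMap.proj Iᶜ : (Finset (Fin n) → R) →ₗ[R] R)

theorem BwedgeDual_apply {R : Type*} [CommRing R] {n : ℕ} (α β : Finset (Fin n) → R) :
    BwedgeDual α β = Bwedge α β := by
  simp [BwedgeDual, Bwedge, mul_assoc]

/-- The coordinate expression of the quadratic form `q_∧` on the exterior algebra `∧(R^n)`
in the basis `{v_I}` (with `0` playing the role of the index `1` of 1-indexed notation). -/
def qwedge {R : Type*} [CommRing R] {n : ℕ} [NeZero n] (α : Finset (Fin n) → R) : R :=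
  ∑ I ∈ Finset.univ.filter (fun I : Finset (Fin n) => (0 : Fin n) ∈ I),
    (-1 : R) ^ (∑ i ∈ I, (i : ℕ)) * α I * α Iᶜ

/-- The coordinate expression of the endomorphism `ℓ_{v₁} ∘ d_{v₁*}`: the projection keeping
exactly the coordinates at sets `I` containing `0`. -/
noncomputable def Pproj (R : Type*) [CommRing R] (n : ℕ) [NeZero n] :
    (Finset (Fin n) → R) →ₗ[R] (Finset (Fin n) → R) :=
  LinearMap.pi fun I : Finset (Fin n) =>
    if (0 : Fin n) ∈ I then (LinearMap.proj I : (Finset (Fin n) → R) →ₗ[R] R) else 0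

lemma trace_ring {R : Type*} [CommRing R] (f : R →ₗ[R] R) : LinearMap.trace R R f = f 1 := by
  rw [LinearMap.trace_eq_matrix_trace R (Module.Basis.singleton Unit R) f]
  simp [Matrix.trace, LinearMap.toMatrix_apply]

lemma sign_compl {R : Type*} [CommRing R] {n : ℕ} (h : n % 4 = 0 ∨ (2 : R) = 0)
    (I : Finset (Fin n)) :
    ((-1 : R)) ^ (∑ i ∈ I, (i : ℕ)) = (-1 : R) ^ (∑ i ∈ Iᶜ, (i : ℕ)) := by
  rcases h with h | h
  · set a := ∑ i ∈ I, (i : ℕ)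
    set b := ∑ i ∈ Iᶜ, (i : ℕ)
    have hsum : a + b = ∑ i : Fin n, (i : ℕ) := Finset.sum_add_sum_compl I _
    obtain ⟨k, hk⟩ : 4 ∣ n := Nat.dvd_of_mod_eq_zero h
    have h2 : (∑ i : Fin n, (i : ℕ)) * 2 = n * (n - 1) := by
      rw [show (∑ i : Fin n, (i : ℕ)) = ∑ i ∈ Finset.range n, i from
        Fin.sum_univ_eq_sum_range (fun i => i) n]
      exact Finset.sum_range_id_mul_two n
    have heven : Even (a + b) := by
      have h3 : (a + b) * 2 = (2 * (k * (n - 1))) * 2 := by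
        rw [hsum, h2, hk]; ring
      exact ⟨k * (n - 1), by omega⟩
    have h1 : (-1 : R) ^ (a + b) = 1 := heven.neg_one_pow
    calc (-1 : R) ^ a = (-1) ^ a * (-1) ^ (a + b) := by rw [h1, mul_one]
      _ = ((-1) ^ a * (-1) ^ a) * (-1) ^ b := by rw [pow_add]; ring
      _ = (-1) ^ (2 * a) * (-1) ^ b := by rw [two_mul, pow_add]
      _ = (-1) ^ b := by rw [pow_mul]; norm_num
  · have h1 : (-1 : R) = 1 := by linear_combination -h
    rw [h1, one_pow, one_pow]

lemma Bwedge_P {R : Type*} [CommRing R] {n : ℕ} [NeZero n]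
    (h : n % 4 = 0 ∨ (2 : R) = 0) (x : Finset (Fin n) → R) :
    Bwedge x (Pproj R n x) = qwedge x := by
  have hP : ∀ I : Finset (Fin n), Pproj R n x I = if (0 : Fin n) ∈ I then x I else 0 := by
    intro I
    simp only [Pproj, LinearMap.pi_apply]
    split <;> simp_all
  rw [Bwedge]
  have : ∀ I : Finset (Fin n),
      (-1 : R) ^ (∑ i ∈ I, (i : ℕ)) * x I * Pproj R n x Iᶜ =
      if (0 : Fin n) ∈ Iᶜ then (-1 : R) ^ (∑ i ∈ I, (i : ℕ)) * x I * x Iᶜ else 0 := by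
    intro I; rw [hP]; split <;> simp
  rw [Finset.sum_congr rfl fun I _ => this I, ← Finset.sum_filter]
  rw [qwedge]
  refine Finset.sum_bij' (fun I _ => Iᶜ) (fun I _ => Iᶜ) ?_ ?_ ?_ ?_ ?_
  · intro I hI
    simp only [Finset.mem_filter, Finset.mem_univ, true_and] at hI
    simpa using hI
  · intro I hI
    simp only [Finset.mem_filter, Finset.mem_univ, true_and] at hI
    simpa using hI
  · intro I _; simp
  · intro I _; simp
  · intro I hI
    rw [compl_compl, ← sign_compl h I]
    ring


/-- The canonical semi-trace corresponds to `q_∧`: the trace of `P ∘ φ_B(x ⊗ x)` equals `q(x)`;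
equivalently `B(x, P x) = q(x)`. -/
theorem trace_P_comp_phi_eq_qwedge {R : Type*} [CommRing R] {n : ℕ} [NeZero n]
    (h : n % 4 = 0 ∨ (2 : R) = 0) (x : Finset (Fin n) → R) :
    LinearMap.trace R (Finset (Fin n) → R)
        (Pproj R n ∘ₗ (LinearMap.toSpanSingleton R (Finset (Fin n) → R) x ∘ₗ BwedgeDual x)) =
      qwedge x ∧
    Bwedge x (Pproj R n x) = qwedge x := by
  refine ⟨?_, Bwedge_P h x⟩
  rw [← LinearMap.comp_assoc,
    LinearMap.trace_comp_comm' (BwedgeDual x)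
      (Pproj R n ∘ₗ LinearMap.toSpanSingleton R (Finset (Fin n) → R) x),
    trace_ring]
  simp only [LinearMap.comp_apply, LinearMap.toSpanSingleton_apply, one_smul]
  rw [BwedgeDual_apply]
  exact Bwedge_P h x
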